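/- The number of s-decreasing trees for a weak composition s = (s_1, ..., s_n) equals the product (1+s_n)(1+s_n+s_{n-1})···(1+s_n+s_{n-1}+···+s_2), i.e. ∏_{i=1}^{n-1} (1 + s_{n-i+1} + s_{n-i+2} + ··· + s_n). -/

import Mathlib

namespace SPermutahedron

/-! ### Planar rooted trees and `s`-decreasing trees -/

/-- A planar rooted tree: either a leaf, or an internal node with a natural
number label and an ordered list of children. -/
inductive PTree where
  | leaf : PTree
  | node : ℕ → List PTree → PTree

mutual
  /-- The list of labels of the internal nodes of a planar tree. -/
  def labels : PTree → List ℕ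
    | .leaf => []
    | .node i cs => i :: labelsList cs
  def labelsList : List PTree → List ℕ
    | [] => []
    | t :: ts => labels t ++ labelsList ts
end

mutual
  /-- Local condition for an `s`-decreasing tree: node `i` has `s i + 1`
  children and every internal-node descendant of `i` has a label `< i`. -/
  def IsSDecAux (s : ℕ → ℕ) : PTree → Prop
    | .leaf => True
    | .node i cs => cs.length = s i + 1 ∧ (∀ j ∈ labelsList cs, j < i) ∧ IsSDecList s cs
  def IsSDecList (s : ℕ → ℕ) : List PTree → Prop
    | [] => True
    | t :: ts => IsSDecAux s t ∧ IsSDecList s ts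
end

/-- `T` is an `s`-decreasing tree on `n` internal nodes: its internal nodes are
labeled bijectively by `1, …, n`, node `i` has `s i + 1` children, and any
internal-node descendant `j` of a node `i` satisfies `j < i`. -/
def IsSDecTree (s : ℕ → ℕ) (n : ℕ) (T : PTree) : Prop :=
  IsSDecAux s T ∧ (labels T).Perm (List.range' 1 n)

/-! ### Auxiliary machinery -/

mutual
  def nl : PTree → ℕ
    | .leaf => 1
    | .node _ cs => nlL cs
  def nlL : List PTree → ℕ
    | [] => 0
    | t :: ts => nl t + nlL ts
end

mutual
  def contract (a : ℕ) : PTree → PTree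
    | .leaf => .leaf
    | .node i cs => if i = a then .leaf else .node i (contractL a cs)
  def contractL (a : ℕ) : List PTree → List PTree
    | [] => []
    | t :: ts => contract a t :: contractL a ts
end

mutual
  def ins (a k c : ℕ) : PTree → PTree
    | .leaf => if k = 0 then .node a (List.replicate c .leaf) else .leaf
    | .node i cs => .node i (insL a k c cs)
  def insL (a k c : ℕ) : List PTree → List PTree
    | [] => []
    | t :: ts => if k < nl t then ins a k c t :: ts else t :: insL a (k - nl t) c ts
end

mutual
  def idx (a : ℕ) : PTree → ℕ
    | .leaf => 0
    | .node i cs => if i = a then 0 else idxL a cs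
  def idxL (a : ℕ) : List PTree → ℕ
    | [] => 0
    | t :: ts => if a ∈ labels t then idx a t else nl (contract a t) + idxL a ts
end

/- basic lemmas -/

theorem labelsList_replicate_leaf (c : ℕ) : labelsList (List.replicate c .leaf) = [] := by
  induction c with
  | zero => rfl
  | succ c ih => simp [List.replicate, labelsList, labels, ih]

theorem isSDecList_replicate_leaf (s : ℕ → ℕ) (c : ℕ) :
    IsSDecList s (List.replicate c .leaf) := by
  induction c with
  | zero => trivial
  | succ c ih => exact ⟨trivial, ih⟩

theorem eq_replicate_of_labelsList_nil : ∀ cs : List PTree, labelsList cs = [] →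
    cs = List.replicate cs.length .leaf := by
  intro cs
  induction cs with
  | nil => intro; rfl
  | cons t ts ih =>
    intro h
    simp only [labelsList, List.append_eq_nil_iff] at h
    have ht : t = .leaf := by
      cases t with
      | leaf => rfl
      | node i cs' => simp [labels] at h
    subst ht
    simp only [List.length_cons, List.replicate_succ]
    exact congrArg _ (ih h.2)

mutual
theorem nl_eq (s : ℕ → ℕ) : ∀ t : PTree, IsSDecAux s t →
    nl t = 1 + ((labels t).map s).sum
  | .leaf, _ => rfl
  | .node i cs, h => by
    obtain ⟨hlen, _, hl⟩ := h
    simp only [nl, labels, List.map_cons, List.sum_cons]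
    rw [nlL_eq s cs hl, hlen]
    omega
theorem nlL_eq (s : ℕ → ℕ) : ∀ cs : List PTree, IsSDecList s cs →
    nlL cs = cs.length + ((labelsList cs).map s).sum
  | [], _ => rfl
  | t :: ts, h => by
    obtain ⟨ht, hts⟩ := h
    simp only [nlL, labelsList, List.length_cons, List.map_append, List.sum_append]
    rw [nl_eq s t ht, nlL_eq s ts hts]
    omega
end

mutual
theorem contract_eq_self (a : ℕ) : ∀ t : PTree, a ∉ labels t → contract a t = t
  | .leaf, _ => rfl
  | .node i cs, h => by
    simp only [labels, List.mem_cons, not_or] at h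
    simp [contract, Ne.symm h.1, contractL_eq_self a cs h.2]
theorem contractL_eq_self (a : ℕ) : ∀ cs : List PTree, a ∉ labelsList cs →
    contractL a cs = cs
  | [], _ => rfl
  | t :: ts, h => by
    simp only [labelsList, List.mem_append, not_or] at h
    simp [contractL, contract_eq_self a t h.1, contractL_eq_self a ts h.2]
end

mutual
theorem mem_labels_contract (a j : ℕ) : ∀ t : PTree, j ∈ labels (contract a t) → j ∈ labels t
  | .leaf, h => h
  | .node i cs, h => by
    simp only [contract] at h
    split at h
    · exact absurd h (by simp [labels])
    · simp only [labels, List.mem_cons] at h ⊢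
      exact h.imp id (mem_labelsList_contractL a j cs)
theorem mem_labelsList_contractL (a j : ℕ) : ∀ cs : List PTree,
    j ∈ labelsList (contractL a cs) → j ∈ labelsList cs
  | [], h => h
  | t :: ts, h => by
    simp only [contractL, labelsList, List.mem_append] at h ⊢
    exact h.imp (mem_labels_contract a j t) (mem_labelsList_contractL a j ts)
end

theorem contractL_length (a : ℕ) : ∀ cs : List PTree, (contractL a cs).length = cs.length
  | [] => rfl
  | t :: ts => by simp [contractL, contractL_length a ts]

mutual
theorem isSDec_contract (s : ℕ → ℕ) (a : ℕ) : ∀ t : PTree, IsSDecAux s t →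
    IsSDecAux s (contract a t)
  | .leaf, _ => trivial
  | .node i cs, h => by
    obtain ⟨hlen, hlt, hl⟩ := h
    simp only [contract]
    split
    · trivial
    · refine ⟨by simpa [contractL_length] using hlen, fun j hj => hlt j ?_,
        isSDecList_contractL s a cs hl⟩
      exact mem_labelsList_contractL a j cs hj
theorem isSDecList_contractL (s : ℕ → ℕ) (a : ℕ) : ∀ cs : List PTree, IsSDecList s cs →
    IsSDecList s (contractL a cs)
  | [], _ => trivial
  | t :: ts, h => ⟨isSDec_contract s a t h.1, isSDecList_contractL s a ts h.2⟩
end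


mutual
theorem mem_labels_ins (a k c j : ℕ) : ∀ t : PTree, j ∈ labels (ins a k c t) →
    j = a ∨ j ∈ labels t
  | .leaf, h => by
    simp only [ins] at h
    split at h
    · simp only [labels, labelsList_replicate_leaf, List.mem_cons, List.not_mem_nil,
        or_false] at h
      exact Or.inl h
    · exact Or.inr h
  | .node i cs, h => by
    simp only [ins, labels, List.mem_cons] at h ⊢
    rcases h with h | h
    · exact Or.inr (Or.inl h)
    · rcases mem_labelsList_insL a k c j cs h with h | h
      · exact Or.inl h
      · exact Or.inr (Or.inr h)
theorem mem_labelsList_insL (a k c j : ℕ) : ∀ cs : List PTree,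
    j ∈ labelsList (insL a k c cs) → j = a ∨ j ∈ labelsList cs
  | [], h => Or.inr h
  | t :: ts, h => by
    simp only [insL] at h
    split at h <;> simp only [labelsList, List.mem_append] at h ⊢
    · rcases h with h | h
      · exact (mem_labels_ins a k c j t h).imp id Or.inl
      · exact Or.inr (Or.inr h)
    · rcases h with h | h
      · exact Or.inr (Or.inl h)
      · exact (mem_labelsList_insL a _ c j ts h).imp id Or.inr
end

mutual
theorem labels_ins (a k c : ℕ) : ∀ t : PTree, k < nl t →
    (labels (ins a k c t)).Perm (a :: labels t)
  | .leaf, h => by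
    have hk : k = 0 := by simpa [nl] using h
    subst hk
    simp [ins, labels, labelsList_replicate_leaf]
  | .node i cs, h => by
    simp only [ins, labels]
    exact ((labelsList_insL a k c cs (by simpa [nl] using h)).cons i).trans
      (List.Perm.swap a i _)
theorem labelsList_insL (a k c : ℕ) : ∀ cs : List PTree, k < nlL cs →
    (labelsList (insL a k c cs)).Perm (a :: labelsList cs)
  | t :: ts, h => by
    simp only [insL]
    split
    · rename_i hk
      simp only [labelsList]
      exact ((labels_ins a k c t hk).append_right (labelsList ts)).trans
        (by simp)
    · rename_i hk
      simp only [labelsList]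
      have h2 : k - nl t < nlL ts := by simp only [nlL] at h; omega
      refine ((labelsList_insL a (k - nl t) c ts h2).append_left (labels t)).trans ?_
      exact List.perm_middle
end

theorem insL_length (a k c : ℕ) : ∀ cs : List PTree, (insL a k c cs).length = cs.length
  | [] => rfl
  | t :: ts => by
    simp only [insL]
    split <;> simp [insL_length a _ c ts]

mutual
theorem isSDec_ins (s : ℕ → ℕ) (a k : ℕ) : ∀ t : PTree, IsSDecAux s t →
    (∀ j ∈ labels t, a < j) → IsSDecAux s (ins a k (s a + 1) t)
  | .leaf, _, _ => by
    simp only [ins]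
    split
    · exact ⟨by simp, by simp [labelsList_replicate_leaf], isSDecList_replicate_leaf s _⟩
    · trivial
  | .node i cs, h, hgt => by
    obtain ⟨hlen, hlt, hl⟩ := h
    refine ⟨by simpa [insL_length] using hlen, fun j hj => ?_,
      isSDecList_insL s a k cs hl (fun j hj => hgt j (by simp [labels, hj]))⟩
    rcases mem_labelsList_insL a k (s a + 1) j cs hj with rfl | hj
    · exact hgt i (by simp [labels])
    · exact hlt j hj
theorem isSDecList_insL (s : ℕ → ℕ) (a k : ℕ) : ∀ cs : List PTree, IsSDecList s cs →
    (∀ j ∈ labelsList cs, a < j) → IsSDecList s (insL a k (s a + 1) cs)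
  | [], _, _ => trivial
  | t :: ts, h, hgt => by
    simp only [insL]
    split
    · exact ⟨isSDec_ins s a k t h.1 (fun j hj => hgt j (by simp [labelsList, hj])), h.2⟩
    · exact ⟨h.1, isSDecList_insL s a _ ts h.2 (fun j hj => hgt j (by simp [labelsList, hj]))⟩
end


mutual
theorem idx_lt (a : ℕ) : ∀ t : PTree, a ∈ labels t → idx a t < nl (contract a t)
  | .node i cs, h => by
    simp only [idx, contract]
    split
    · simp [nl]
    · rename_i hne
      simp only [labels, List.mem_cons] at h
      rcases h with rfl | h
      · exact absurd rfl hne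
      · simpa [nl] using idxL_lt a cs h
theorem idxL_lt (a : ℕ) : ∀ cs : List PTree, a ∈ labelsList cs →
    idxL a cs < nlL (contractL a cs)
  | t :: ts, h => by
    simp only [idxL, contractL, nlL]
    split
    · rename_i ha
      have := idx_lt a t ha
      omega
    · rename_i ha
      simp only [labelsList, List.mem_append] at h
      rcases h with h | h
      · exact absurd h ha
      · have := idxL_lt a ts h
        omega
end

mutual
theorem ins_idx_contract (s : ℕ → ℕ) (a : ℕ) : ∀ t : PTree, IsSDecAux s t →
    a ∈ labels t → (∀ j ∈ labels t, a ≤ j) → (labels t).count a = 1 →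
    ins a (idx a t) (s a + 1) (contract a t) = t
  | .node i cs, h, hmem, hle, hcount => by
    obtain ⟨hlen, hlt, hl⟩ := h
    by_cases hia : i = a
    · subst hia
      have hnil : labelsList cs = [] := by
        rw [List.eq_nil_iff_forall_not_mem]
        intro j hj
        exact absurd (hle j (by simp [labels, hj])) (not_le.mpr (hlt j hj))
      have h1 : contract i (.node i cs) = .leaf := by simp [contract]
      have h2 : idx i (.node i cs) = 0 := by simp [idx]
      rw [h1, h2]
      rw [eq_replicate_of_labelsList_nil cs hnil, hlen]
      simp [ins]
    · simp only [labels, List.mem_cons] at hmem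
      rcases hmem with rfl | hmem
      · exact absurd rfl hia
      simp only [idx, contract, if_neg hia, ins]
      congr 1
      refine insL_idxL_contractL s a cs hl hmem
        (fun j hj => hle j (by simp [labels, hj])) ?_
      have : (labels (.node i cs)).count a = 1 := hcount
      simp only [labels, List.count_cons] at this
      simpa [hia] using this
theorem insL_idxL_contractL (s : ℕ → ℕ) (a : ℕ) : ∀ cs : List PTree, IsSDecList s cs →
    a ∈ labelsList cs → (∀ j ∈ labelsList cs, a ≤ j) → (labelsList cs).count a = 1 →
    insL a (idxL a cs) (s a + 1) (contractL a cs) = cs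
  | t :: ts, h, hmem, hle, hcount => by
    simp only [labelsList, List.mem_append, List.count_append] at hmem hle hcount
    by_cases ha : a ∈ labels t
    · have hts : a ∉ labelsList ts := by
        intro hts
        have h1 := List.count_pos_iff.mpr ha
        have h2 := List.count_pos_iff.mpr hts
        omega
      simp only [idxL, contractL, if_pos ha, insL, if_pos (idx_lt a t ha)]
      rw [ins_idx_contract s a t h.1 ha (fun j hj => hle j (Or.inl hj))
        (by have := List.count_eq_zero_of_not_mem hts; omega),
        contractL_eq_self a ts hts]
    · have hts : a ∈ labelsList ts := hmem.resolve_left ha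
      simp only [idxL, contractL, if_neg ha, insL]
      rw [if_neg (by omega), contract_eq_self a t ha]
      congr 1
      rw [Nat.add_sub_cancel_left]
      exact insL_idxL_contractL s a ts h.2 hts (fun j hj => hle j (Or.inr hj))
        (by have := List.count_eq_zero_of_not_mem ha; omega)
end

mutual
theorem contract_ins (a k c : ℕ) : ∀ t : PTree, a ∉ labels t → k < nl t →
    contract a (ins a k c t) = t
  | .leaf, _, hk => by
    have hk : k = 0 := by simpa [nl] using hk
    subst hk
    simp [ins, contract]
  | .node i cs, ha, hk => by
    simp only [labels, List.mem_cons, not_or] at ha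
    simp only [ins, contract, if_neg (Ne.symm ha.1)]
    rw [contractL_insL a k c cs ha.2 (by simpa [nl] using hk)]
theorem contractL_insL (a k c : ℕ) : ∀ cs : List PTree, a ∉ labelsList cs → k < nlL cs →
    contractL a (insL a k c cs) = cs
  | t :: ts, ha, hk => by
    simp only [labelsList, List.mem_append, not_or] at ha
    simp only [insL]
    split
    · rename_i h
      simp only [contractL]
      rw [contract_ins a k c t ha.1 h, contractL_eq_self a ts ha.2]
    · rename_i h
      simp only [contractL]
      rw [contract_eq_self a t ha.1,
        contractL_insL a (k - nl t) c ts ha.2 (by simp only [nlL] at hk; omega)]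
end

mutual
theorem idx_ins (a k c : ℕ) : ∀ t : PTree, a ∉ labels t → k < nl t →
    idx a (ins a k c t) = k
  | .leaf, _, hk => by
    have hk : k = 0 := by simpa [nl] using hk
    subst hk
    simp [ins, idx]
  | .node i cs, ha, hk => by
    simp only [labels, List.mem_cons, not_or] at ha
    simp only [ins, idx, if_neg (Ne.symm ha.1)]
    exact idxL_insL a k c cs ha.2 (by simpa [nl] using hk)
theorem idxL_insL (a k c : ℕ) : ∀ cs : List PTree, a ∉ labelsList cs → k < nlL cs →
    idxL a (insL a k c cs) = k
  | t :: ts, ha, hk => by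
    simp only [labelsList, List.mem_append, not_or] at ha
    simp only [insL]
    split
    · rename_i h
      have hmem : a ∈ labels (ins a k c t) := (labels_ins a k c t h).mem_iff.mpr (by simp)
      simp only [idxL, if_pos hmem]
      exact idx_ins a k c t ha.1 h
    · rename_i h
      simp only [idxL, if_neg ha.1]
      rw [contract_eq_self a t ha.1,
        idxL_insL a (k - nl t) c ts ha.2 (by simp only [nlL] at hk; omega)]
      omega
end

theorem eq_leaf_of_labels_nil : ∀ t : PTree, labels t = [] → t = .leaf
  | .leaf, _ => rfl
  | .node i cs, h => by simp [labels] at h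

theorem isSDec_leaf (s : ℕ → ℕ) : IsSDecAux s .leaf := by simp [IsSDecAux]

theorem sum_range'_eq (s : ℕ → ℕ) : ∀ (m x : ℕ),
    ((List.range' x m).map s).sum = ∑ r ∈ Finset.Ico x (x + m), s r
  | 0, x => by simp
  | (m+1), x => by
    rw [List.range'_succ]
    simp only [List.map_cons, List.sum_cons]
    rw [sum_range'_eq s m (x+1),
      Finset.sum_eq_sum_Ico_succ_bot (by omega : x < x + (m+1))]
    have h2 : x + 1 + m = x + (m + 1) := by omega
    rw [h2]

theorem count_aux (s : ℕ → ℕ) : ∀ (m a : ℕ),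
    Nat.card {T : PTree // IsSDecAux s T ∧ (labels T).Perm (List.range' a m)} =
      ∏ k ∈ Finset.Ico 1 m, (1 + ∑ r ∈ Finset.Ico (a + k) (a + m), s r)
  | 0, a => by
    have h1 : Finset.Ico 1 0 = ∅ := by simp
    rw [h1, Finset.prod_empty]
    refine Nat.card_eq_one_iff_unique.mpr
      ⟨⟨fun x y => ?_⟩, ⟨⟨.leaf, isSDec_leaf s, by simp [labels]⟩⟩⟩
    obtain ⟨x, hx⟩ := x
    obtain ⟨y, hy⟩ := y
    have hx' := eq_leaf_of_labels_nil x hx.2.eq_nil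
    have hy' := eq_leaf_of_labels_nil y hy.2.eq_nil
    subst hx'; subst hy'; rfl
  | (m+1), a => by
    have hL : ∀ T : PTree, IsSDecAux s T → (labels T).Perm (List.range' (a+1) m) →
        nl T = 1 + ∑ r ∈ Finset.Ico (a+1) (a+1+m), s r := by
      intro T h hp
      rw [nl_eq s T h, (hp.map s).sum_eq, sum_range'_eq]
    have key : ∀ T : PTree, IsSDecAux s T → (labels T).Perm (List.range' a (m+1)) →
        (IsSDecAux s (contract a T) ∧ (labels (contract a T)).Perm (List.range' (a+1) m))
        ∧ idx a T < 1 + ∑ r ∈ Finset.Ico (a+1) (a+1+m), s r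
        ∧ ins a (idx a T) (s a + 1) (contract a T) = T := by
      intro T h hp
      have hmem : a ∈ labels T := hp.mem_iff.mpr (by simp [List.mem_range'_1])
      have hle : ∀ j ∈ labels T, a ≤ j := by
        intro j hj
        have := hp.mem_iff.mp hj
        rw [List.mem_range'_1] at this
        omega
      have hcount : (labels T).count a = 1 := by
        rw [hp.count_eq]
        exact List.count_eq_one_of_mem List.nodup_range'
          (by simp [List.mem_range'_1])
      have hrec := ins_idx_contract s a T h hmem hle hcount
      have hsd := isSDec_contract s a T h
      have hidx := idx_lt a T hmem
      have hperm : (labels (contract a T)).Perm (List.range' (a+1) m) := by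
        have h2 : (labels (ins a (idx a T) (s a + 1) (contract a T))).Perm
            (a :: labels (contract a T)) := labels_ins _ _ _ _ hidx
        rw [hrec] at h2
        have h3 : (a :: labels (contract a T)).Perm (a :: List.range' (a+1) m) := by
          refine h2.symm.trans (hp.trans ?_)
          rw [List.range'_succ]
        exact h3.cons_inv
      exact ⟨⟨hsd, hperm⟩, by rw [← hL _ hsd hperm]; exact hidx, hrec⟩
    have bkd : ∀ T' : PTree, IsSDecAux s T' → (labels T').Perm (List.range' (a+1) m) →
        ∀ k : ℕ, k < 1 + ∑ r ∈ Finset.Ico (a+1) (a+1+m), s r →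
        (IsSDecAux s (ins a k (s a + 1) T') ∧
          (labels (ins a k (s a + 1) T')).Perm (List.range' a (m+1)))
        ∧ contract a (ins a k (s a + 1) T') = T'
        ∧ idx a (ins a k (s a + 1) T') = k := by
      intro T' h hp k hk
      have hgt : ∀ j ∈ labels T', a < j := by
        intro j hj
        have := hp.mem_iff.mp hj
        rw [List.mem_range'_1] at this
        omega
      have hnotmem : a ∉ labels T' := fun hj => lt_irrefl a (hgt a hj)
      have hnl : k < nl T' := by rw [hL T' h hp]; exact hk
      refine ⟨⟨isSDec_ins s a k T' h hgt, ?_⟩, contract_ins a k _ T' hnotmem hnl,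
        idx_ins a k _ T' hnotmem hnl⟩
      refine (labels_ins a k _ T' hnl).trans ?_
      rw [List.range'_succ]
      exact hp.cons a
    have e : {T : PTree // IsSDecAux s T ∧ (labels T).Perm (List.range' a (m+1))} ≃
        {T : PTree // IsSDecAux s T ∧ (labels T).Perm (List.range' (a+1) m)} ×
          Fin (1 + ∑ r ∈ Finset.Ico (a+1) (a+1+m), s r) :=
      { toFun := fun T => ⟨⟨contract a T.1, (key T.1 T.2.1 T.2.2).1⟩,
          ⟨idx a T.1, (key T.1 T.2.1 T.2.2).2.1⟩⟩
        invFun := fun p => ⟨ins a p.2.1 (s a + 1) p.1.1,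
          (bkd p.1.1 p.1.2.1 p.1.2.2 p.2.1 p.2.2).1⟩
        left_inv := fun T => Subtype.ext (key T.1 T.2.1 T.2.2).2.2
        right_inv := fun p => by
          obtain ⟨⟨T', hT'⟩, k⟩ := p
          have h := bkd T' hT'.1 hT'.2 k.1 k.2
          exact Prod.ext (Subtype.ext h.2.1) (Fin.ext h.2.2) }
    rw [Nat.card_congr e, Nat.card_prod, count_aux s m (a+1), Nat.card_eq_fintype_card,
      Fintype.card_fin]
    -- arithmetic
    cases m with
    | zero => simp
    | succ m' =>
      rw [Finset.prod_eq_prod_Ico_succ_bot (by omega : 1 < m' + 1 + 1)]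
      have e1 : a + 1 + (m' + 1) = a + (m' + 1 + 1) := by omega
      rw [e1]
      have e2 : a + 1 = a + (1:ℕ) := rfl
      rw [mul_comm]
      congr 1
      rw [Finset.prod_Ico_eq_prod_range, Finset.prod_Ico_eq_prod_range]
      have e3 : m' + 1 - 1 = m' := by omega
      have e4 : m' + 1 + 1 - 2 = m' := by omega
      rw [e3, e4]
      refine Finset.prod_congr rfl fun i _ => ?_
      have e5 : a + 1 + (1 + i) = a + (2 + i) := by omega
      rw [e5]
theorem card_sDecreasingTrees' (n : ℕ) (s : ℕ → ℕ) :
    Nat.card {T : PTree // IsSDecAux s T ∧ (labels T).Perm (List.range' 1 n)} =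
      ∏ i ∈ Finset.Icc 1 (n - 1), (1 + ∑ r ∈ Finset.Icc (n - i + 1) n, s r) := by
  rw [count_aux s n 1]
  cases n with
  | zero => simp
  | succ n' =>
    rw [show n' + 1 - 1 = n' from rfl, ← Finset.Ico_add_one_right_eq_Icc]
    refine Finset.prod_nbij' (fun k => n' + 1 - k) (fun i => n' + 1 - i)
      (fun k hk => ?_) (fun i hi => ?_) (fun k hk => ?_) (fun i hi => ?_) (fun k hk => ?_)
    · simp only [Finset.mem_Ico] at hk ⊢; omega
    · simp only [Finset.mem_Ico] at hi ⊢; omega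
    · simp only [Finset.mem_Ico] at hk
      show n' + 1 - (n' + 1 - k) = k
      omega
    · simp only [Finset.mem_Ico] at hi
      show n' + 1 - (n' + 1 - i) = i
      omega
    · simp only [Finset.mem_Ico] at hk
      show 1 + ∑ r ∈ Finset.Ico (1 + k) (1 + (n' + 1)), s r =
        1 + ∑ r ∈ Finset.Icc (n' + 1 - (n' + 1 - k) + 1) (n' + 1), s r
      have h1 : n' + 1 - (n' + 1 - k) + 1 = 1 + k := by omega
      rw [h1, ← Finset.Ico_add_one_right_eq_Icc]
      congr 3
      omega

/-- (Formula (1) of Ceballos–Pons.) For a weak composition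
`s = (s₁, …, sₙ)`, the number of `s`-decreasing trees is
`(1+sₙ)(1+sₙ+sₙ₋₁) ⋯ (1+sₙ+⋯+s₂) = ∏_{i=1}^{n-1} (1 + s_{n-i+1} + ⋯ + s_n)`. -/
theorem card_sDecreasingTrees (n : ℕ) (s : ℕ → ℕ) :
    Nat.card {T : PTree // IsSDecTree s n T} =
      ∏ i ∈ Finset.Icc 1 (n - 1), (1 + ∑ r ∈ Finset.Icc (n - i + 1) n, s r) := by
  simp only [IsSDecTree]
  exact card_sDecreasingTrees' n s

end SPermutahedron
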